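/- Let n ≥ 3 and let R be a commutative ring. For the polynomial f(z) = z^n + s·z + t over R, the discriminant of f equals (up to sign) (n-1)^(n-1)·s^n − (−n)^n·t^(n-1). -/

import Mathlib

open Polynomial Finset

private lemma bj_prod_deriv {K : Type*} [Field K] (m : ℕ) (s t : K) (r : Fin (m + 3) → K)
    (hroots : (X ^ (m + 3) + C s * X + C t : K[X]) = ∏ i : Fin (m + 3), (X - C (r i))) :
    ∏ i : Fin (m + 3), (((m + 3 : ℕ) : K) * r i ^ (m + 2) + s)
      = ((m + 3 : ℕ) : K) ^ (m + 3) * t ^ (m + 2)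
        + (-1) ^ (m + 2) * (((m + 3 : ℕ) : K) - 1) ^ (m + 2) * s ^ (m + 3) := by
  classical
  have hfr : ∀ i, r i ^ (m + 3) + s * r i + t = 0 := by
    intro i
    have h := congrArg (eval (r i)) hroots
    simp only [eval_add, eval_mul, eval_pow, eval_X, eval_C, eval_prod, eval_sub] at h
    exact h.trans (Finset.prod_eq_zero (Finset.mem_univ i) (sub_self _))
  by_cases ht : t = 0
  · subst ht
    have h0 : ∏ j : Fin (m + 3), (0 - r j) = 0 := by
      have h := congrArg (eval 0) hroots
      simp only [eval_add, eval_mul, eval_pow, eval_X, eval_C, eval_prod, eval_sub] at h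
      simpa using h.symm
    obtain ⟨k, -, hk⟩ := Finset.prod_eq_zero_iff.mp h0
    have hrk : r k = 0 := by
      have := sub_eq_zero.mp hk
      exact this.symm
    have hq : (X ^ (m + 2) + C s : K[X]) = ∏ j ∈ univ.erase k, (X - C (r j)) := by
      apply mul_left_cancel₀ (X_ne_zero (R := K))
      calc (X : K[X]) * (X ^ (m + 2) + C s)
          = X ^ (m + 3) + C s * X + C 0 := by rw [C_0, add_zero]; ring
        _ = ∏ j : Fin (m + 3), (X - C (r j)) := hroots
        _ = (X - C (r k)) * ∏ j ∈ univ.erase k, (X - C (r j)) :=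
            (Finset.mul_prod_erase univ _ (Finset.mem_univ k)).symm
        _ = X * ∏ j ∈ univ.erase k, (X - C (r j)) := by rw [hrk, C_0, sub_zero]
    have hri : ∀ i ∈ univ.erase k, r i ^ (m + 2) = -s := by
      intro i hi
      have h := congrArg (eval (r i)) hq
      simp only [eval_add, eval_pow, eval_X, eval_C, eval_prod, eval_sub] at h
      have h2 : ∏ x ∈ univ.erase k, (r i - r x) = 0 := Finset.prod_eq_zero hi (sub_self _)
      rw [h2] at h
      exact eq_neg_of_add_eq_zero_left h
    calc ∏ i : Fin (m + 3), (((m + 3 : ℕ) : K) * r i ^ (m + 2) + s)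
        = (((m + 3 : ℕ) : K) * r k ^ (m + 2) + s)
            * ∏ i ∈ univ.erase k, (((m + 3 : ℕ) : K) * r i ^ (m + 2) + s) :=
          (Finset.mul_prod_erase univ _ (Finset.mem_univ k)).symm
      _ = s * ∏ i ∈ univ.erase k, ((-1) * ((((m + 3 : ℕ) : K) - 1) * s)) := by
          rw [hrk]
          congr 1
          · rw [zero_pow (by omega), mul_zero, zero_add]
          · exact Finset.prod_congr rfl fun i hi => by rw [hri i hi]; ring
      _ = s * ((-1) * ((((m + 3 : ℕ) : K) - 1) * s)) ^ (m + 2) := by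
          rw [Finset.prod_const, Finset.card_erase_of_mem (Finset.mem_univ k),
            Finset.card_univ, Fintype.card_fin]
          norm_num
      _ = ((m + 3 : ℕ) : K) ^ (m + 3) * (0 : K) ^ (m + 2)
            + (-1) ^ (m + 2) * (((m + 3 : ℕ) : K) - 1) ^ (m + 2) * s ^ (m + 3) := by
          rw [zero_pow (by omega), mul_zero, zero_add, mul_pow, mul_pow]
          ring
  · -- t ≠ 0
    have h0 : ∏ j : Fin (m + 3), (0 - r j) = t := by
      have h := congrArg (eval 0) hroots
      simp only [eval_add, eval_mul, eval_pow, eval_X, eval_C, eval_prod, eval_sub] at h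
      rw [← h, zero_pow (by omega), mul_zero, zero_add, zero_add]
    have hkeyt : (-1 : K) ^ (m + 3) * ∏ j, r j = t := by
      rw [← h0]
      calc (-1 : K) ^ (m + 3) * ∏ j, r j
          = (∏ _j : Fin (m + 3), (-1 : K)) * ∏ j, r j := by
            rw [Finset.prod_const, Finset.card_univ, Fintype.card_fin]
        _ = ∏ j : Fin (m + 3), (-1 : K) * r j := Finset.prod_mul_distrib.symm
        _ = ∏ j : Fin (m + 3), (0 - r j) := Finset.prod_congr rfl fun j _ => by ring
    have hkey : ∀ i, r i * (((m + 3 : ℕ) : K) * r i ^ (m + 2) + s)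
        = -((((m + 3 : ℕ) : K) - 1) * s * r i + ((m + 3 : ℕ) : K) * t) := by
      intro i
      linear_combination ((m + 3 : ℕ) : K) * hfr i
    have hmul : (∏ i, r i) * ∏ i : Fin (m + 3), (((m + 3 : ℕ) : K) * r i ^ (m + 2) + s)
        = ∏ i : Fin (m + 3), -((((m + 3 : ℕ) : K) - 1) * s * r i + ((m + 3 : ℕ) : K) * t) := by
      rw [← Finset.prod_mul_distrib]
      exact Finset.prod_congr rfl fun i _ => hkey i
    have htP : t * ∏ i : Fin (m + 3), (((m + 3 : ℕ) : K) * r i ^ (m + 2) + s)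
        = (-1 : K) ^ (m + 3)
            * ∏ i : Fin (m + 3), -((((m + 3 : ℕ) : K) - 1) * s * r i + ((m + 3 : ℕ) : K) * t) := by
      have h' := congrArg (fun z => (-1 : K) ^ (m + 3) * z) hmul
      rw [← mul_assoc, hkeyt] at h'
      exact h'
    have hsq3 : ((-1 : K) ^ (m + 3)) * ((-1 : K) ^ (m + 3)) = 1 := by
      rw [← pow_add, ← two_mul, pow_mul]
      norm_num
    have hnegpow : (-(((m + 3 : ℕ) : K) * t)) ^ (m + 3)
        = (-1) ^ (m + 3) * ((m + 3 : ℕ) : K) ^ (m + 3) * t ^ (m + 3) := by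
      rw [show -(((m + 3 : ℕ) : K) * t) = (-1) * (((m + 3 : ℕ) : K) * t) from by ring,
        mul_pow, mul_pow, mul_assoc]
    by_cases ha : (((m + 3 : ℕ) : K) - 1) * s = 0
    · -- (n-1) s = 0
      have hR : ∏ i : Fin (m + 3), -((((m + 3 : ℕ) : K) - 1) * s * r i + ((m + 3 : ℕ) : K) * t)
          = (-1) ^ (m + 3) * ((m + 3 : ℕ) : K) ^ (m + 3) * t ^ (m + 3) := by
        rw [Finset.prod_congr rfl fun i _ => by rw [ha, zero_mul, zero_add],
          Finset.prod_const, Finset.card_univ, Fintype.card_fin, hnegpow]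
      have hz : (((m + 3 : ℕ) : K) - 1) ^ (m + 2) * s ^ (m + 3) = 0 := by
        calc (((m + 3 : ℕ) : K) - 1) ^ (m + 2) * s ^ (m + 3)
            = ((((m + 3 : ℕ) : K) - 1) ^ (m + 2) * s ^ (m + 2)) * s := by ring
          _ = ((((m + 3 : ℕ) : K) - 1) * s) ^ (m + 2) * s := by rw [mul_pow]
          _ = 0 := by rw [ha, zero_pow (by omega), zero_mul]
      refine mul_left_cancel₀ ht ?_
      rw [htP, hR]
      linear_combination (((m + 3 : ℕ) : K) ^ (m + 3) * t ^ (m + 3)) * hsq3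
        + (-(t * (-1 : K) ^ (m + 2))) * hz
    · -- (n-1) s ≠ 0
      obtain ⟨x0, hax⟩ : ∃ x0 : K,
          (((m + 3 : ℕ) : K) - 1) * s * x0 = -(((m + 3 : ℕ) : K) * t) :=
        ⟨-(((m + 3 : ℕ) : K) * t) / ((((m + 3 : ℕ) : K) - 1) * s), by
          rw [mul_comm]
          exact div_mul_cancel₀ _ ha⟩
      have hx : ∏ j : Fin (m + 3), (x0 - r j) = x0 ^ (m + 3) + s * x0 + t := by
        have h := congrArg (eval x0) hroots
        simp only [eval_add, eval_mul, eval_pow, eval_X, eval_C, eval_prod, eval_sub] at h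
        exact h.symm
      have hR : ∏ i : Fin (m + 3), -((((m + 3 : ℕ) : K) - 1) * s * r i + ((m + 3 : ℕ) : K) * t)
          = (((m + 3 : ℕ) : K) - 1) ^ (m + 3) * s ^ (m + 3) * (x0 ^ (m + 3) + s * x0 + t) := by
        rw [← hx]
        calc ∏ i : Fin (m + 3), -((((m + 3 : ℕ) : K) - 1) * s * r i + ((m + 3 : ℕ) : K) * t)
            = ∏ i : Fin (m + 3), ((((m + 3 : ℕ) : K) - 1) * s) * (x0 - r i) :=
              Finset.prod_congr rfl fun i _ => by linear_combination -hax
          _ = ((((m + 3 : ℕ) : K) - 1) * s) ^ (m + 3) * ∏ i : Fin (m + 3), (x0 - r i) := by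
              rw [Finset.prod_mul_distrib, Finset.prod_const, Finset.card_univ, Fintype.card_fin]
          _ = (((m + 3 : ℕ) : K) - 1) ^ (m + 3) * s ^ (m + 3) * ∏ i : Fin (m + 3), (x0 - r i) := by
              rw [mul_pow]
      have hpow : (((m + 3 : ℕ) : K) - 1) ^ (m + 3) * s ^ (m + 3) * x0 ^ (m + 3)
          = (-1) ^ (m + 3) * ((m + 3 : ℕ) : K) ^ (m + 3) * t ^ (m + 3) := by
        calc (((m + 3 : ℕ) : K) - 1) ^ (m + 3) * s ^ (m + 3) * x0 ^ (m + 3)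
            = ((((m + 3 : ℕ) : K) - 1) * s * x0) ^ (m + 3) := by rw [mul_pow, mul_pow]
          _ = (-(((m + 3 : ℕ) : K) * t)) ^ (m + 3) := by rw [hax]
          _ = (-1) ^ (m + 3) * ((m + 3 : ℕ) : K) ^ (m + 3) * t ^ (m + 3) := hnegpow
      refine mul_left_cancel₀ ht ?_
      rw [htP, hR]
      linear_combination ((-1 : K) ^ (m + 3)) * hpow
        + (((m + 3 : ℕ) : K) ^ (m + 3) * t ^ (m + 3)) * hsq3
        + ((-1 : K) ^ (m + 3) * (((m + 3 : ℕ) : K) - 1) ^ (m + 2) * s ^ (m + 3)) * hax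

private lemma bj_field {K : Type*} [Field K] (m : ℕ) (s t : K) (r : Fin (m + 3) → K)
    (hroots : (X ^ (m + 3) + C s * X + C t : K[X]) = ∏ i : Fin (m + 3), (X - C (r i))) :
    (∏ i : Fin (m + 3), ∏ j ∈ Finset.univ.filter (fun j => i < j), (r i - r j) ^ 2)
      = (-1) ^ ((∑ i : Fin (m + 3), (Finset.univ.filter (fun j => i < j)).card) + m + 2)
        * ((((m + 3 : ℕ) : K) - 1) ^ (m + 2) * s ^ (m + 3)
            - (-((m + 3 : ℕ) : K)) ^ (m + 3) * t ^ (m + 2)) := by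
  classical
  have hd2 : ∀ i : Fin (m + 3), (((m + 3 : ℕ) : K)) * r i ^ (m + 2) + s
      = ∏ j ∈ univ.erase i, (r i - r j) := by
    intro i
    have hsplit : (X ^ (m + 3) + C s * X + C t : K[X])
        = (X - C (r i)) * ∏ j ∈ univ.erase i, (X - C (r j)) := by
      rw [hroots]
      exact (Finset.mul_prod_erase univ _ (Finset.mem_univ i)).symm
    have h := congrArg (fun p : K[X] => eval (r i) (derivative p)) hsplit
    simp only [derivative_add, derivative_mul, derivative_X_pow, derivative_C, derivative_X,
      derivative_sub, eval_add, eval_mul, eval_pow, eval_X, eval_C, eval_sub, eval_prod,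
      eval_one, eval_zero, sub_zero, mul_one, mul_zero, zero_mul, add_zero, zero_add, one_mul,
      sub_self,
      show m + 3 - 1 = m + 2 from rfl] at h
    exact h
  have hP := bj_prod_deriv m s t r hroots
  have hsplitset : ∀ i : Fin (m + 3),
      Finset.univ.erase i
        = (Finset.univ.filter fun j => j < i) ∪ (Finset.univ.filter fun j => i < j) := by
    intro i
    ext j
    simp only [Finset.mem_erase, Finset.mem_union, Finset.mem_filter, Finset.mem_univ,
      true_and, and_true]
    exact ne_iff_lt_or_gt
  have hdisj : ∀ i : Fin (m + 3),
      Disjoint (Finset.univ.filter fun j => j < i) (Finset.univ.filter fun j => i < j) := by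
    intro i
    rw [Finset.disjoint_left]
    intro j hj hj'
    simp only [Finset.mem_filter, Finset.mem_univ, true_and] at hj hj'
    exact lt_asymm hj hj'
  have hswap : (∏ i : Fin (m + 3), ∏ j ∈ Finset.univ.filter (fun j => j < i), (r i - r j))
      = ∏ i : Fin (m + 3), ∏ j ∈ Finset.univ.filter (fun j => i < j), (r j - r i) :=
    Finset.prod_comm' (by
      intro x y
      simp only [Finset.mem_filter, Finset.mem_univ, true_and, and_true])
  set N := ∑ i : Fin (m + 3), (Finset.univ.filter (fun j : Fin (m + 3) => i < j)).card with hN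
  set D := ∏ i : Fin (m + 3), ∏ j ∈ Finset.univ.filter (fun j => i < j), (r i - r j) with hD
  have hstep : ∏ i : Fin (m + 3), ∏ j ∈ univ.erase i, (r i - r j) = (-1) ^ N * D ^ 2 := by
    calc ∏ i : Fin (m + 3), ∏ j ∈ univ.erase i, (r i - r j)
        = ∏ i : Fin (m + 3), ((∏ j ∈ Finset.univ.filter (fun j => j < i), (r i - r j))
            * ∏ j ∈ Finset.univ.filter (fun j => i < j), (r i - r j)) := by
          refine Finset.prod_congr rfl fun i _ => ?_
          rw [hsplitset i, Finset.prod_union (hdisj i)]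
      _ = (∏ i : Fin (m + 3), ∏ j ∈ Finset.univ.filter (fun j => j < i), (r i - r j)) * D :=
          Finset.prod_mul_distrib
      _ = (∏ i : Fin (m + 3), ((-1) ^ (Finset.univ.filter (fun j : Fin (m + 3) => i < j)).card
              * ∏ j ∈ Finset.univ.filter (fun j => i < j), (r i - r j))) * D := by
          rw [hswap]
          congr 1
          refine Finset.prod_congr rfl fun i _ => ?_
          calc ∏ j ∈ Finset.univ.filter (fun j => i < j), (r j - r i)
              = ∏ j ∈ Finset.univ.filter (fun j => i < j), (-1) * (r i - r j) :=
                Finset.prod_congr rfl fun j _ => by ring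
            _ = (-1) ^ (Finset.univ.filter (fun j : Fin (m + 3) => i < j)).card
                  * ∏ j ∈ Finset.univ.filter (fun j => i < j), (r i - r j) := by
                rw [Finset.prod_mul_distrib, Finset.prod_const]
      _ = ((-1) ^ N * D) * D := by
          rw [Finset.prod_mul_distrib, Finset.prod_pow_eq_pow_sum, ← hN, ← hD]
      _ = (-1) ^ N * D ^ 2 := by ring
  have hprodP : ∏ i : Fin (m + 3), ∏ j ∈ univ.erase i, (r i - r j)
      = ((m + 3 : ℕ) : K) ^ (m + 3) * t ^ (m + 2)
        + (-1) ^ (m + 2) * (((m + 3 : ℕ) : K) - 1) ^ (m + 2) * s ^ (m + 3) := by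
    rw [← hP]
    exact Finset.prod_congr rfl fun i _ => (hd2 i).symm
  have hEq : (-1 : K) ^ N * D ^ 2
      = ((m + 3 : ℕ) : K) ^ (m + 3) * t ^ (m + 2)
        + (-1) ^ (m + 2) * (((m + 3 : ℕ) : K) - 1) ^ (m + 2) * s ^ (m + 3) :=
    hstep.symm.trans hprodP
  have hsqN : ((-1 : K) ^ N) * ((-1 : K) ^ N) = 1 := by
    rw [← pow_add, ← two_mul, pow_mul]
    norm_num
  have hsq2 : ((-1 : K) ^ (m + 2)) * ((-1 : K) ^ (m + 2)) = 1 := by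
    rw [← pow_add, ← two_mul, pow_mul]
    norm_num
  have hD2 : D ^ 2 = (-1 : K) ^ N
      * (((m + 3 : ℕ) : K) ^ (m + 3) * t ^ (m + 2)
        + (-1) ^ (m + 2) * (((m + 3 : ℕ) : K) - 1) ^ (m + 2) * s ^ (m + 3)) := by
    linear_combination ((-1 : K) ^ N) * hEq - (D ^ 2) * hsqN
  have hLHS : (∏ i : Fin (m + 3), ∏ j ∈ Finset.univ.filter (fun j => i < j), (r i - r j) ^ 2)
      = D ^ 2 := by
    rw [hD]
    simp_rw [Finset.prod_pow]
  rw [hLHS, hD2]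
  have hpa : (-1 : K) ^ (N + m + 2) = (-1 : K) ^ N * (-1 : K) ^ (m + 2) := by
    rw [show N + m + 2 = N + (m + 2) from by omega, pow_add]
  have hneg3 : (-((m + 3 : ℕ) : K)) ^ (m + 3)
      = (-1) ^ (m + 2) * (-1) * ((m + 3 : ℕ) : K) ^ (m + 3) := by
    rw [show -((m + 3 : ℕ) : K) = (-1) * ((m + 3 : ℕ) : K) from by ring, mul_pow, pow_succ]
  rw [hpa, hneg3]
  linear_combination (-((-1 : K) ^ N * ((m + 3 : ℕ) : K) ^ (m + 3) * t ^ (m + 2))) * hsq2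

/-- For `f(z) = z^n + s z + t` (n ≥ 3) over a commutative ring, the discriminant of `f`
(computed as `∏_{i<j} (r_i - r_j)^2` for the roots `r_i` of `f`) equals, up to sign,
`(n-1)^(n-1) s^n − (−n)^n t^(n-1)`. -/
theorem discriminant_of_bring_jerrard (R : Type*) [CommRing R] [IsDomain R]
    (n : ℕ) (hn : 3 ≤ n) (s t : R) (r : Fin n → R)
    (hroots : (X ^ n + C s * X + C t : R[X]) = ∏ i : Fin n, (X - C (r i))) :
    ∃ ε : R, (ε = 1 ∨ ε = -1) ∧
      (∏ i : Fin n, ∏ j ∈ Finset.univ.filter (fun j => i < j), (r i - r j) ^ 2)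
        = ε * (((n : R) - 1) ^ (n - 1) * s ^ n - (-(n : R)) ^ n * t ^ (n - 1)) := by
  classical
  obtain ⟨m, rfl⟩ : ∃ m, n = m + 3 := ⟨n - 3, by omega⟩
  refine ⟨(-1) ^ ((∑ i : Fin (m + 3),
      (Finset.univ.filter (fun j : Fin (m + 3) => i < j)).card) + m + 2), ?_, ?_⟩
  · rcases Nat.even_or_odd ((∑ i : Fin (m + 3),
        (Finset.univ.filter (fun j : Fin (m + 3) => i < j)).card) + m + 2) with h | h
    · exact Or.inl h.neg_one_pow
    · exact Or.inr h.neg_one_pow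
  · set K := FractionRing R
    have hinj : Function.Injective (algebraMap R K) := IsFractionRing.injective R K
    apply hinj
    have hroots' : (X ^ (m + 3) + C (algebraMap R K s) * X + C (algebraMap R K t) : K[X])
        = ∏ i : Fin (m + 3), (X - C (algebraMap R K (r i))) := by
      have h := congrArg (Polynomial.map (algebraMap R K)) hroots
      simpa only [Polynomial.map_add, Polynomial.map_pow, Polynomial.map_mul,
        Polynomial.map_X, Polynomial.map_C, Polynomial.map_prod, Polynomial.map_sub] using h
    have hkey := bj_field m (algebraMap R K s) (algebraMap R K t)
      (fun i => algebraMap R K (r i)) hroots'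
    simp only [map_mul, map_prod, map_pow, map_sub, map_neg, map_one, map_natCast]
    exact hkey
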